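/- Let X be a real normed linear space with dim X ≥ 2. If for all x, y ∈ S_X there exist nonzero real numbers α, β such that ‖αx + βy‖² + ‖αx − βy‖² ≤ 2(α² + β²), then the norm of X is induced by an inner product. -/

import Mathlib

open Real

namespace IPSLE

/-- quadratic form given by coefficients `(a, b, c)`: `a s² + 2 c s t + b t²`. -/
def ff (B : ℝ × ℝ × ℝ) (p : ℝ × ℝ) : ℝ :=
  B.1 * p.1 ^ 2 + 2 * B.2.2 * p.1 * p.2 + B.2.1 * p.2 ^ 2

lemma ff_cont (B : ℝ × ℝ × ℝ) : Continuous (ff B) := by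
  unfold ff; fun_prop

lemma ff_cont_B (p : ℝ × ℝ) : Continuous (fun B => ff B p) := by
  unfold ff; fun_prop

/-- 2-homogeneous nonneg-on-circle implies nonneg everywhere -/
lemma nonneg_of_circle (g : ℝ × ℝ → ℝ)
    (hom : ∀ c p, g (c * p.1, c * p.2) = c ^ 2 * g p)
    (hc : ∀ p : ℝ × ℝ, p.1 ^ 2 + p.2 ^ 2 = 1 → 0 ≤ g p) :
    ∀ p, 0 ≤ g p := by
  intro p
  rcases eq_or_ne p 0 with rfl | hp
  · have h := hom 0 ((0:ℝ), (0:ℝ))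
    simp at h
    exact le_of_eq h.symm
  · have hpos : 0 < p.1 ^ 2 + p.2 ^ 2 := by
      have h1 : p.1 ≠ 0 ∨ p.2 ≠ 0 := by
        by_contra hcon
        push_neg at hcon
        exact hp (Prod.ext hcon.1 hcon.2)
      rcases h1 with h1 | h1 <;> positivity
    set ρ : ℝ := Real.sqrt (p.1 ^ 2 + p.2 ^ 2) with hρ
    have hρpos : 0 < ρ := Real.sqrt_pos.2 hpos
    have hρsq : ρ ^ 2 = p.1 ^ 2 + p.2 ^ 2 := Real.sq_sqrt hpos.le
    have hu : (p.1 / ρ) ^ 2 + (p.2 / ρ) ^ 2 = 1 := by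
      field_simp
      linarith [hρsq]
    have h0 : 0 ≤ g (p.1 / ρ, p.2 / ρ) := hc _ hu
    have h2 : g (ρ * (p.1 / ρ), ρ * (p.2 / ρ)) = ρ ^ 2 * g (p.1 / ρ, p.2 / ρ) :=
      hom ρ (p.1 / ρ, p.2 / ρ)
    have h3 : (ρ * (p.1 / ρ), ρ * (p.2 / ρ)) = p := by
      field_simp
    rw [h3] at h2
    nlinarith

end IPSLE

namespace IPSLE

/-- determinant of the coefficient triple -/
def dd (B : ℝ × ℝ × ℝ) : ℝ := B.1 * B.2.1 - B.2.2 ^ 2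

/-- the admissible set of PSD quadratic minorants of `q` -/
def SS (q : ℝ × ℝ → ℝ) : Set (ℝ × ℝ × ℝ) :=
  {B | (∀ p, ff B p ≤ q p) ∧ 0 ≤ B.1 ∧ 0 ≤ B.2.1 ∧ B.2.2 ^ 2 ≤ B.1 * B.2.1}

lemma circle_compact : IsCompact {p : ℝ × ℝ | p.1 ^ 2 + p.2 ^ 2 = 1} := by
  have hsub : {p : ℝ × ℝ | p.1 ^ 2 + p.2 ^ 2 = 1} ⊆
      (Set.Icc (-1 : ℝ) 1) ×ˢ (Set.Icc (-1 : ℝ) 1) := by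
    rintro ⟨u, v⟩ h
    simp only [Set.mem_setOf_eq] at h
    constructor <;> constructor <;> nlinarith
  exact ((isCompact_Icc).prod (isCompact_Icc)).of_isClosed_subset
    (isClosed_eq (by fun_prop) continuous_const) hsub

lemma circle_nonempty : ({p : ℝ × ℝ | p.1 ^ 2 + p.2 ^ 2 = 1}).Nonempty :=
  ⟨(1, 0), by norm_num⟩

/-- minimum of q on the circle is positive -/
lemma qmin_pos (q : ℝ × ℝ → ℝ) (hcont : Continuous q)
    (hpos : ∀ p : ℝ × ℝ, p ≠ 0 → 0 < q p) :
    ∃ ε : ℝ, 0 < ε ∧ ∀ p : ℝ × ℝ, p.1 ^ 2 + p.2 ^ 2 = 1 → ε ≤ q p := by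
  obtain ⟨z, hz, hzmin⟩ := circle_compact.exists_isMinOn circle_nonempty hcont.continuousOn
  refine ⟨q z, hpos z ?_, fun p hp => hzmin hp⟩
  rintro rfl
  simp at hz

lemma SS_compact (q : ℝ × ℝ → ℝ) : IsCompact (SS q) := by
  set K : ℝ := 1 + q (1, 0) * q (0, 1)
  have hsub : SS q ⊆ (Set.Icc 0 (q (1, 0))) ×ˢ ((Set.Icc 0 (q (0, 1))) ×ˢ (Set.Icc (-K) K)) := by
    rintro ⟨a, b, c⟩ ⟨hle, ha, hb, hc⟩
    have h1 : a ≤ q (1, 0) := by have := hle (1, 0); unfold ff at this; simp at this; linarith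
    have h2 : b ≤ q (0, 1) := by have := hle (0, 1); unfold ff at this; simp at this; linarith
    have hcK : c ^ 2 ≤ a * b := hc
    have h3 : a * b ≤ q (1, 0) * q (0, 1) := by nlinarith
    have h4 : (0:ℝ) ≤ q (1,0) * q (0,1) := by nlinarith
    have hK : c ^ 2 ≤ K ^ 2 := by
      simp only [K]
      nlinarith
    have hKpos : 0 ≤ K := by
      simp only [K]
      nlinarith
    have : |c| ≤ K := by
      rw [abs_le]
      constructor <;> nlinarith [abs_nonneg c, sq_abs c]
    rcases abs_le.1 this with ⟨hl, hr⟩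
    exact ⟨⟨ha, h1⟩, ⟨hb, h2⟩, ⟨hl, hr⟩⟩
  have hclosed : IsClosed (SS q) := by
    have h1 : SS q = (⋂ p : ℝ × ℝ, {B : ℝ × ℝ × ℝ | ff B p ≤ q p}) ∩
        ({B : ℝ × ℝ × ℝ | 0 ≤ B.1} ∩ ({B | 0 ≤ B.2.1} ∩ {B | B.2.2 ^ 2 ≤ B.1 * B.2.1})) := by
      ext B
      simp only [SS, Set.mem_setOf_eq, Set.mem_inter_iff, Set.mem_iInter]
    rw [h1]
    refine IsClosed.inter (isClosed_iInter fun p => isClosed_le (ff_cont_B p) continuous_const)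
      (IsClosed.inter (isClosed_le continuous_const (by fun_prop))
        (IsClosed.inter (isClosed_le continuous_const (by fun_prop))
          (isClosed_le (by fun_prop) (by fun_prop))))
  exact (isCompact_Icc.prod (isCompact_Icc.prod isCompact_Icc)).of_isClosed_subset hclosed hsub

lemma SS_nonempty (q : ℝ × ℝ → ℝ) (hcont : Continuous q)
    (hhom : ∀ (c : ℝ) (p : ℝ × ℝ), q (c * p.1, c * p.2) = c ^ 2 * q p)
    (hpos : ∀ p : ℝ × ℝ, p ≠ 0 → 0 < q p) :
    ∃ B ∈ SS q, 0 < dd B := by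
  obtain ⟨ε, hε, hεq⟩ := qmin_pos q hcont hpos
  refine ⟨(ε, ε, 0), ⟨?_, hε.le, hε.le, by simp only; nlinarith⟩, by unfold dd; simp only; nlinarith⟩
  intro p
  have h2 : ∀ p : ℝ × ℝ, p.1 ^ 2 + p.2 ^ 2 = 1 → 0 ≤ q p - ff (ε, ε, 0) p := by
    intro p hp
    have := hεq p hp
    unfold ff
    simp only
    nlinarith
  have := nonneg_of_circle (fun p => q p - ff (ε, ε, 0) p)
    (by
      intro c p
      have h3 := hhom c p
      unfold ff
      simp only
      nlinarith [h3]) h2 p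
  linarith

end IPSLE

namespace IPSLE

lemma exists_Bmax (q : ℝ × ℝ → ℝ) (hcont : Continuous q)
    (hhom : ∀ (c : ℝ) (p : ℝ × ℝ), q (c * p.1, c * p.2) = c ^ 2 * q p)
    (hpos : ∀ p : ℝ × ℝ, p ≠ 0 → 0 < q p) :
    ∃ B ∈ SS q, 0 < dd B ∧ ∀ B' ∈ SS q, dd B' ≤ dd B := by
  obtain ⟨B₀, hB₀, hd₀⟩ := SS_nonempty q hcont hhom hpos
  have hdc : Continuous dd := by unfold dd; fun_prop
  obtain ⟨B, hB, hmax⟩ := (SS_compact q).exists_isMaxOn ⟨B₀, hB₀⟩ hdc.continuousOn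
  exact ⟨B, hB, lt_of_lt_of_le hd₀ (hmax hB₀), fun B' hB' => hmax hB'⟩

/-- r is nonnegative everywhere for B ∈ SS q -/
lemma r_nonneg (q : ℝ × ℝ → ℝ) (B : ℝ × ℝ × ℝ) (hB : B ∈ SS q) (p : ℝ × ℝ) :
    0 ≤ q p - ff B p := by linarith [hB.1 p]

/-- Step 1: existence of a contact point on the circle -/
lemma exists_zero (q : ℝ × ℝ → ℝ) (hcont : Continuous q)
    (hhom : ∀ (c : ℝ) (p : ℝ × ℝ), q (c * p.1, c * p.2) = c ^ 2 * q p)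
    (B : ℝ × ℝ × ℝ) (hB : B ∈ SS q) (hmax : ∀ B' ∈ SS q, dd B' ≤ dd B) :
    ∃ z : ℝ × ℝ, z.1 ^ 2 + z.2 ^ 2 = 1 ∧ q z = ff B z := by
  by_contra hno
  push_neg at hno
  -- r > 0 on the circle; get minimum
  obtain ⟨z, hz, hzmin⟩ := circle_compact.exists_isMinOn circle_nonempty
    ((hcont.sub (ff_cont B)).continuousOn)
  set m : ℝ := q z - ff B z with hm
  have hmpos : 0 < m := lt_of_le_of_ne (r_nonneg q B hB z) (fun h => hno z hz (by linarith))
  set B' : ℝ × ℝ × ℝ := (B.1 + m, B.2.1 + m, B.2.2) with hB'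
  have hle' : ∀ p, ff B' p ≤ q p := by
    have key : ∀ p : ℝ × ℝ, 0 ≤ q p - ff B' p := by
      apply nonneg_of_circle
      · intro c p
        have h1 := hhom c p
        unfold ff
        simp only [hB']
        nlinarith
      · intro p hp
        have h2 : m ≤ q p - ff B p := hzmin hp
        unfold ff at h2 ⊢
        simp only [hB']
        nlinarith
    intro p; linarith [key p]
  have hmem : B' ∈ SS q := by
    obtain ⟨-, h1, h2, h3⟩ := hB
    exact ⟨hle', by simp only [hB']; linarith, by simp only [hB']; linarith,
      by simp only [hB']; nlinarith⟩
  have : dd B' ≤ dd B := hmax B' hmem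
  obtain ⟨-, h1, h2, h3⟩ := hB
  unfold dd at this
  simp only [hB'] at this
  nlinarith

end IPSLE

namespace IPSLE

set_option maxHeartbeats 2000000 in
/-- Step 2: the contact set cannot consist of a single antipodal pair. -/
lemma not_single_contact (q : ℝ × ℝ → ℝ) (hcont : Continuous q)
    (hhom : ∀ (c : ℝ) (p : ℝ × ℝ), q (c * p.1, c * p.2) = c ^ 2 * q p)
    (B : ℝ × ℝ × ℝ) (hB : B ∈ SS q) (hdd : 0 < dd B)
    (hmax : ∀ B' ∈ SS q, dd B' ≤ dd B)
    (z : ℝ × ℝ) (hz : z.1 ^ 2 + z.2 ^ 2 = 1)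
    (honly : ∀ w : ℝ × ℝ, w.1 ^ 2 + w.2 ^ 2 = 1 → q w = ff B w → (w = z ∨ w = -z)) :
    False := by
  obtain ⟨A, Bb, C⟩ := B
  obtain ⟨z1, z2⟩ := z
  obtain ⟨hle, hA0, hB0, hC0⟩ := hB
  simp only at hle hA0 hB0 hC0 hz honly
  unfold dd at hdd
  simp only at hdd
  have hApos : 0 < A := by nlinarith
  have hBpos : 0 < Bb := by nlinarith
  obtain ⟨Pz, hPzdef⟩ : ∃ x : ℝ, x = Bb * z1 ^ 2 - 2 * C * z1 * z2 + A * z2 ^ 2 := ⟨_, rfl⟩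
  obtain ⟨Pn, hPndef⟩ : ∃ x : ℝ, x = Bb * z2 ^ 2 + 2 * C * z1 * z2 + A * z1 ^ 2 := ⟨_, rfl⟩
  have hPz : 0 < Pz := by
    rw [hPzdef]
    nlinarith [sq_nonneg (A * z2 - C * z1), sq_nonneg (Bb * z1 - C * z2)]
  have hPn : 0 < Pn := by
    rw [hPndef]
    nlinarith [sq_nonneg (A * z1 + C * z2), sq_nonneg (Bb * z2 + C * z1)]
  obtain ⟨μ, hμdef⟩ : ∃ x : ℝ, x = Pn / (2 * Pz) := ⟨_, rfl⟩
  have hμ : 0 < μ := by rw [hμdef]; positivity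
  obtain ⟨Ma, hMadef⟩ : ∃ x : ℝ, x = z2 ^ 2 - μ * z1 ^ 2 := ⟨_, rfl⟩
  obtain ⟨Mb, hMbdef⟩ : ∃ x : ℝ, x = z1 ^ 2 - μ * z2 ^ 2 := ⟨_, rfl⟩
  obtain ⟨Mc, hMcdef⟩ : ∃ x : ℝ, x = -(z1 * z2) - μ * (z1 * z2) := ⟨_, rfl⟩
  have hffM : ∀ p : ℝ × ℝ, ff (Ma, Mb, Mc) p
      = (-z2 * p.1 + z1 * p.2) ^ 2 - μ * (z1 * p.1 + z2 * p.2) ^ 2 := by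
    intro p; unfold ff; rw [hMadef, hMbdef, hMcdef]; ring
  have hMz : ff (Ma, Mb, Mc) (z1, z2) = -μ := by
    rw [hffM]
    simp only
    linear_combination (-μ * (z1 ^ 2 + z2 ^ 2 + 1)) * hz
  have hMzneg : ff (Ma, Mb, Mc) (-z1, -z2) = -μ := by
    rw [hffM]
    simp only
    linear_combination (-μ * (z1 ^ 2 + z2 ^ 2 + 1)) * hz
  obtain ⟨D1, hD1def⟩ : ∃ x : ℝ, x = A * Mb + Bb * Ma - 2 * C * Mc := ⟨_, rfl⟩
  have hD1 : D1 = Pn / 2 := by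
    have h2 : D1 = Pn - μ * Pz := by
      rw [hD1def, hMadef, hMbdef, hMcdef, hPndef, hPzdef]; ring
    rw [h2, hμdef]
    field_simp
    ring
  have hD1pos : 0 < D1 := by rw [hD1]; positivity
  -- the compact set where the perturbation is nonnegative
  obtain ⟨K, hKdef⟩ : ∃ K : Set (ℝ × ℝ),
      K = {p | p.1 ^ 2 + p.2 ^ 2 = 1 ∧ 0 ≤ ff (Ma, Mb, Mc) p} := ⟨_, rfl⟩
  have hKsub : K ⊆ {p : ℝ × ℝ | p.1 ^ 2 + p.2 ^ 2 = 1} := by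
    rw [hKdef]; exact fun p hp => hp.1
  have hKcl : IsClosed K := by
    have h1 : K = {p : ℝ × ℝ | p.1 ^ 2 + p.2 ^ 2 = 1} ∩ {p | 0 ≤ ff (Ma, Mb, Mc) p} := by
      rw [hKdef]; ext p; simp [Set.mem_setOf_eq, Set.mem_inter_iff]
    rw [h1]
    exact (isClosed_eq (by fun_prop) continuous_const).inter
      (isClosed_le continuous_const (ff_cont (Ma, Mb, Mc)))
  have hKcomp : IsCompact K := circle_compact.of_isClosed_subset hKcl hKsub
  have hKr : ∀ p ∈ K, 0 < q p - ff (A, Bb, C) p := by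
    intro p hp
    rw [hKdef] at hp
    rcases lt_or_eq_of_le (r_nonneg q (A, Bb, C) ⟨hle, hA0, hB0, hC0⟩ p) with h | h
    · exact h
    · exfalso
      have hcontact : q p = ff (A, Bb, C) p := by linarith
      rcases honly p hp.1 hcontact with h1 | h1
      · have h3 : (0:ℝ) ≤ ff (Ma, Mb, Mc) (z1, z2) := by
          have := hp.2
          rwa [h1] at this
        rw [hMz] at h3
        linarith
      · have h3 : (0:ℝ) ≤ ff (Ma, Mb, Mc) (-z1, -z2) := by
          have := hp.2
          rwa [h1] at this
        rw [hMzneg] at h3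
        linarith
  have hm : ∃ m₁ : ℝ, 0 < m₁ ∧ ∀ p ∈ K, m₁ ≤ q p - ff (A, Bb, C) p := by
    rcases Set.eq_empty_or_nonempty K with hKe | hKne
    · exact ⟨1, one_pos, by rw [hKe]; rintro p ⟨⟩⟩
    · obtain ⟨p₀, hp₀, hmin⟩ := hKcomp.exists_isMinOn hKne
        ((hcont.sub (ff_cont (A, Bb, C))).continuousOn)
      exact ⟨q p₀ - ff (A, Bb, C) p₀, hKr p₀ hp₀, fun p hp => hmin hp⟩
  obtain ⟨m₁, hm₁, hm₁le⟩ := hm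
  obtain ⟨ddM, hddM⟩ : ∃ x : ℝ, x = Ma * Mb - Mc ^ 2 := ⟨_, rfl⟩
  obtain ⟨t, htdef⟩ : ∃ x : ℝ,
      x = min (min m₁ (D1 / (|ddM| + 1))) (min (A / (|Ma| + 1)) (Bb / (|Mb| + 1))) := ⟨_, rfl⟩
  have ht : 0 < t := by
    rw [htdef]
    have h1 : 0 < D1 / (|ddM| + 1) := by positivity
    have h2 : 0 < A / (|Ma| + 1) := by positivity
    have h3 : 0 < Bb / (|Mb| + 1) := by positivity
    simp only [lt_min_iff]
    exact ⟨⟨hm₁, h1⟩, h2, h3⟩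
  have htm₁ : t ≤ m₁ := htdef ▸ le_trans (min_le_left _ _) (min_le_left _ _)
  have htD : t ≤ D1 / (|ddM| + 1) := htdef ▸ le_trans (min_le_left _ _) (min_le_right _ _)
  have htA : t ≤ A / (|Ma| + 1) := htdef ▸ le_trans (min_le_right _ _) (min_le_left _ _)
  have htB : t ≤ Bb / (|Mb| + 1) := htdef ▸ le_trans (min_le_right _ _) (min_le_right _ _)
  have hMle1 : ∀ p : ℝ × ℝ, p.1 ^ 2 + p.2 ^ 2 = 1 → ff (Ma, Mb, Mc) p ≤ 1 := by
    intro p hp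
    rw [hffM]
    have hlag : (-z2 * p.1 + z1 * p.2) ^ 2 + (z1 * p.1 + z2 * p.2) ^ 2
        = (z1 ^ 2 + z2 ^ 2) * (p.1 ^ 2 + p.2 ^ 2) := by ring
    rw [hz, hp] at hlag
    nlinarith [sq_nonneg (z1 * p.1 + z2 * p.2)]
  have hffB' : ∀ p, ff (A + t * Ma, Bb + t * Mb, C + t * Mc) p
      = ff (A, Bb, C) p + t * ff (Ma, Mb, Mc) p := by
    intro p; unfold ff; ring
  have hle' : ∀ p, ff (A + t * Ma, Bb + t * Mb, C + t * Mc) p ≤ q p := by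
    have key : ∀ p : ℝ × ℝ, 0 ≤ q p - ff (A + t * Ma, Bb + t * Mb, C + t * Mc) p := by
      apply nonneg_of_circle
      · intro c p
        have h1 := hhom c p
        unfold ff
        linear_combination h1
      · intro p hp
        rw [hffB']
        rcases le_or_gt (ff (Ma, Mb, Mc) p) 0 with hMp | hMp
        · have h9 := r_nonneg q (A, Bb, C) ⟨hle, hA0, hB0, hC0⟩ p
          have h8 : t * ff (Ma, Mb, Mc) p ≤ 0 := mul_nonpos_of_nonneg_of_nonpos ht.le hMp
          linarith
        · have hpK : p ∈ K := by rw [hKdef]; exact ⟨hp, hMp.le⟩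
          have h2 := hm₁le p hpK
          have h3 := hMle1 p hp
          have h8 : t * ff (Ma, Mb, Mc) p ≤ t * 1 := mul_le_mul_of_nonneg_left h3 ht.le
          linarith
    intro p; linarith [key p]
  have hA' : 0 < A + t * Ma := by
    have h1 : t * |Ma| ≤ (A / (|Ma| + 1)) * |Ma| :=
      mul_le_mul_of_nonneg_right htA (abs_nonneg _)
    have h4 : (A / (|Ma| + 1)) * |Ma| < A := by
      rw [div_mul_eq_mul_div, div_lt_iff₀ (by positivity)]
      nlinarith [abs_nonneg Ma]
    have h5 : -(t * |Ma|) ≤ t * Ma := by nlinarith [neg_abs_le Ma]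
    linarith
  have hB'' : 0 < Bb + t * Mb := by
    have h1 : t * |Mb| ≤ (Bb / (|Mb| + 1)) * |Mb| :=
      mul_le_mul_of_nonneg_right htB (abs_nonneg _)
    have h4 : (Bb / (|Mb| + 1)) * |Mb| < Bb := by
      rw [div_mul_eq_mul_div, div_lt_iff₀ (by positivity)]
      nlinarith [abs_nonneg Mb]
    have h5 : -(t * |Mb|) ≤ t * Mb := by nlinarith [neg_abs_le Mb]
    linarith
  have hdd' : dd (A + t * Ma, Bb + t * Mb, C + t * Mc) > dd (A, Bb, C) := by
    have h1 : dd (A + t * Ma, Bb + t * Mb, C + t * Mc)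
        = dd (A, Bb, C) + t * D1 + t ^ 2 * ddM := by
      unfold dd
      rw [hD1def, hddM]
      simp only
      ring
    have h2 : -(t ^ 2 * |ddM|) ≤ t ^ 2 * ddM := by nlinarith [neg_abs_le ddM, sq_nonneg t]
    have h3 : t * |ddM| ≤ (D1 / (|ddM| + 1)) * |ddM| :=
      mul_le_mul_of_nonneg_right htD (abs_nonneg _)
    have h4 : (D1 / (|ddM| + 1)) * |ddM| < D1 := by
      rw [div_mul_eq_mul_div, div_lt_iff₀ (by positivity)]
      nlinarith [abs_nonneg ddM]
    have h5 : t ^ 2 * |ddM| < t * D1 := by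
      have h6 : t * (t * |ddM|) ≤ t * ((D1 / (|ddM| + 1)) * |ddM|) :=
        mul_le_mul_of_nonneg_left h3 ht.le
      have h7 : t * ((D1 / (|ddM| + 1)) * |ddM|) < t * D1 := by
        exact mul_lt_mul_of_pos_left h4 ht
      nlinarith
    nlinarith
  have hmem : (A + t * Ma, Bb + t * Mb, C + t * Mc) ∈ SS q := by
    refine ⟨hle', hA'.le, hB''.le, ?_⟩
    have h1 : 0 < dd (A + t * Ma, Bb + t * Mb, C + t * Mc) := lt_trans hdd hdd'
    unfold dd at h1
    simp only at h1 ⊢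
    nlinarith
  have := hmax _ hmem
  linarith

end IPSLE

namespace IPSLE

lemma exists_angle (p : ℝ × ℝ) (hp : p.1 ^ 2 + p.2 ^ 2 = 1) :
    ∃ θ : ℝ, Real.cos θ = p.1 ∧ Real.sin θ = p.2 := by
  have h1 : -1 ≤ p.1 := by nlinarith
  have h2 : p.1 ≤ 1 := by nlinarith
  have h3 : Real.sqrt (1 - p.1 ^ 2) = |p.2| := by
    rw [show (1 : ℝ) - p.1 ^ 2 = p.2 ^ 2 by linarith]
    exact Real.sqrt_sq_eq_abs p.2
  rcases le_or_gt 0 p.2 with h4 | h4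
  · exact ⟨Real.arccos p.1, Real.cos_arccos h1 h2, by
      rw [Real.sin_arccos, h3, abs_of_nonneg h4]⟩
  · refine ⟨-Real.arccos p.1, by rw [Real.cos_neg]; exact Real.cos_arccos h1 h2, ?_⟩
    rw [Real.sin_neg, Real.sin_arccos, h3, abs_of_neg h4, neg_neg]

lemma unit_parallel (z w : ℝ × ℝ) (hz : z.1 ^ 2 + z.2 ^ 2 = 1)
    (hw : w.1 ^ 2 + w.2 ^ 2 = 1) (hcross : z.1 * w.2 - z.2 * w.1 = 0) :
    w = z ∨ w = -z := by
  obtain ⟨z1, z2⟩ := z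
  obtain ⟨w1, w2⟩ := w
  simp only at hz hw hcross
  have hd1 : w1 = (z1 * w1 + z2 * w2) * z1 := by
    linear_combination (-w1) * hz - z2 * hcross
  have hd2 : w2 = (z1 * w1 + z2 * w2) * z2 := by
    linear_combination (-w2) * hz + z1 * hcross
  have hd3 : ((z1 * w1 + z2 * w2) - 1) * ((z1 * w1 + z2 * w2) + 1) = 0 := by
    linear_combination (w1 ^ 2 + w2 ^ 2) * hz + hw - (z1 * w2 - z2 * w1) * hcross
  rcases mul_eq_zero.1 hd3 with h | h
  · left
    have hd : z1 * w1 + z2 * w2 = 1 := by linarith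
    rw [hd] at hd1 hd2
    exact Prod.ext (by linarith) (by linarith)
  · right
    have hd : z1 * w1 + z2 * w2 = -1 := by linarith
    rw [hd] at hd1 hd2
    exact Prod.ext (by simp; linarith) (by simp; linarith)

end IPSLE

namespace IPSLE

set_option maxHeartbeats 1000000 in
/-- Gap extraction: between two projectively distinct zeros of `rr` on the circle,
with a nonzero point somewhere, there is a "gap arc". -/
lemma gap_arc (rr : ℝ × ℝ → ℝ) (hcont : Continuous rr)
    (hneg : ∀ p : ℝ × ℝ, rr (-p.1, -p.2) = rr p)
    (θ₀ θ₁ θ' : ℝ)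
    (h₀ : rr (Real.cos θ₀, Real.sin θ₀) = 0)
    (h₁ : rr (Real.cos θ₁, Real.sin θ₁) = 0)
    (hdist : Real.sin (θ₁ - θ₀) ≠ 0)
    (h' : rr (Real.cos θ', Real.sin θ') ≠ 0) :
    ∃ a b : ℝ, a < b ∧ b < a + Real.pi ∧
      rr (Real.cos a, Real.sin a) = 0 ∧ rr (Real.cos b, Real.sin b) = 0 ∧
      ∀ c : ℝ, a < c → c < b → rr (Real.cos c, Real.sin c) ≠ 0 := by
  have hπ := Real.pi_pos
  set Θ : Set ℝ := {θ | rr (Real.cos θ, Real.sin θ) = 0} with hΘdef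
  have hΘcl : IsClosed Θ := isClosed_eq
    (hcont.comp (Real.continuous_cos.prodMk Real.continuous_sin)) continuous_const
  have hstep : ∀ θ ∈ Θ, θ + Real.pi ∈ Θ := by
    intro θ hθ
    simp only [hΘdef, Set.mem_setOf_eq] at hθ ⊢
    rw [Real.cos_add, Real.sin_add, Real.cos_pi, Real.sin_pi]
    have h2 : (Real.cos θ * -1 - Real.sin θ * 0, Real.sin θ * -1 + Real.cos θ * 0)
        = (-Real.cos θ, -Real.sin θ) := by norm_num
    have h3 := hneg (Real.cos θ, Real.sin θ)
    simp only at h3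
    rw [h2, h3]
    exact hθ
  have hstep' : ∀ θ ∈ Θ, θ - Real.pi ∈ Θ := by
    intro θ hθ
    simp only [hΘdef, Set.mem_setOf_eq] at hθ ⊢
    rw [Real.cos_sub, Real.sin_sub, Real.cos_pi, Real.sin_pi]
    have h2 : (Real.cos θ * -1 + Real.sin θ * 0, Real.sin θ * -1 - Real.cos θ * 0)
        = (-Real.cos θ, -Real.sin θ) := by norm_num
    have h3 := hneg (Real.cos θ, Real.sin θ)
    simp only at h3
    rw [h2, h3]
    exact hθ
  have hstepk : ∀ θ ∈ Θ, ∀ k : ℤ, θ + k * Real.pi ∈ Θ := by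
    intro θ hθ k
    induction k using Int.induction_on with
    | zero => simpa using hθ
    | succ i ih =>
        have := hstep _ ih
        have h2 : θ + (i + 1 : ℤ) * Real.pi = θ + (i : ℤ) * Real.pi + Real.pi := by
          push_cast; ring
        rwa [h2]
    | pred i ih =>
        have := hstep' _ ih
        have h2 : θ + (-i - 1 : ℤ) * Real.pi = θ + (-i : ℤ) * Real.pi - Real.pi := by
          push_cast; ring
        rwa [h2]
  have hθ'Θ : θ' ∉ Θ := h'
  -- sup of zeros below θ'
  have hlow : θ₀ + (⌊(θ' - θ₀) / Real.pi⌋ : ℤ) * Real.pi ∈ Θ ∩ Set.Iic θ' := by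
    refine ⟨hstepk θ₀ h₀ _, ?_⟩
    have h1 : (⌊(θ' - θ₀) / Real.pi⌋ : ℝ) ≤ (θ' - θ₀) / Real.pi := Int.floor_le _
    have h2 : (⌊(θ' - θ₀) / Real.pi⌋ : ℝ) * Real.pi ≤ θ' - θ₀ := by
      rw [← le_div_iff₀ hπ]; exact h1
    simp only [Set.mem_Iic]
    linarith
  have hne1 : (Θ ∩ Set.Iic θ').Nonempty := ⟨_, hlow⟩
  have hbdd1 : BddAbove (Θ ∩ Set.Iic θ') := ⟨θ', fun x hx => hx.2⟩
  have hcl1 : IsClosed (Θ ∩ Set.Iic θ') := hΘcl.inter isClosed_Iic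
  set a : ℝ := sSup (Θ ∩ Set.Iic θ') with hadef
  have hamem : a ∈ Θ ∩ Set.Iic θ' := hcl1.csSup_mem hne1 hbdd1
  have haub : ∀ x ∈ Θ ∩ Set.Iic θ', x ≤ a := fun x hx => le_csSup hbdd1 hx
  have haθ' : a < θ' := lt_of_le_of_ne hamem.2 (fun h => hθ'Θ (h ▸ hamem.1))
  -- inf of zeros above θ'
  have hhigh : θ₀ + (⌈(θ' - θ₀) / Real.pi⌉ : ℤ) * Real.pi ∈ Θ ∩ Set.Ici θ' := by
    refine ⟨hstepk θ₀ h₀ _, ?_⟩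
    have h1 : (θ' - θ₀) / Real.pi ≤ (⌈(θ' - θ₀) / Real.pi⌉ : ℝ) := Int.le_ceil _
    have h2 : θ' - θ₀ ≤ (⌈(θ' - θ₀) / Real.pi⌉ : ℝ) * Real.pi := by
      rw [← div_le_iff₀ hπ]; exact h1
    simp only [Set.mem_Ici]
    linarith
  have hne2 : (Θ ∩ Set.Ici θ').Nonempty := ⟨_, hhigh⟩
  have hbdd2 : BddBelow (Θ ∩ Set.Ici θ') := ⟨θ', fun x hx => hx.2⟩
  have hcl2 : IsClosed (Θ ∩ Set.Ici θ') := hΘcl.inter isClosed_Ici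
  set b : ℝ := sInf (Θ ∩ Set.Ici θ') with hbdef
  have hbmem : b ∈ Θ ∩ Set.Ici θ' := hcl2.csInf_mem hne2 hbdd2
  have hblb : ∀ x ∈ Θ ∩ Set.Ici θ', b ≤ x := fun x hx => csInf_le hbdd2 hx
  have hbθ' : θ' < b := lt_of_le_of_ne hbmem.2 (fun h => hθ'Θ (by rw [h]; exact hbmem.1))
  -- the gap (a,b) contains no zero
  have hgap : ∀ c : ℝ, a < c → c < b → c ∉ Θ := by
    intro c hac hcb hcΘ
    rcases le_or_gt c θ' with hcθ | hcθ
    · exact absurd (haub c ⟨hcΘ, hcθ⟩) (not_le.2 hac)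
    · exact absurd (hblb c ⟨hcΘ, hcθ.le⟩) (not_le.2 hcb)
  -- a zero from a class different from that of a
  have hθ₂ : ∃ θ₂ ∈ Θ, Real.sin (θ₂ - a) ≠ 0 := by
    by_cases h0a : Real.sin (θ₀ - a) = 0
    · refine ⟨θ₁, h₁, fun h1a => hdist ?_⟩
      have : Real.sin ((θ₁ - a) - (θ₀ - a)) = 0 := by
        rw [Real.sin_sub, h0a, h1a]
        ring
      have h2 : θ₁ - a - (θ₀ - a) = θ₁ - θ₀ := by ring
      rwa [h2] at this
    · exact ⟨θ₀, h₀, h0a⟩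
  obtain ⟨θ₂, hθ₂Θ, hθ₂a⟩ := hθ₂
  set m : ℤ := ⌊(a - θ₂) / Real.pi⌋ + 1 with hmdef
  have hcopyΘ : θ₂ + (m : ℤ) * Real.pi ∈ Θ := hstepk θ₂ hθ₂Θ m
  have hcopy1 : a < θ₂ + (m : ℝ) * Real.pi := by
    have h1 : (a - θ₂) / Real.pi < ((⌊(a - θ₂) / Real.pi⌋ : ℝ) + 1) := Int.lt_floor_add_one _
    have h2 : a - θ₂ < ((⌊(a - θ₂) / Real.pi⌋ : ℝ) + 1) * Real.pi := by
      rw [← div_lt_iff₀ hπ]; exact h1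
    have h3 : ((m : ℤ) : ℝ) = (⌊(a - θ₂) / Real.pi⌋ : ℝ) + 1 := by
      rw [hmdef]; push_cast; ring
    rw [h3]; linarith
  have hcopy2 : θ₂ + (m : ℝ) * Real.pi ≤ a + Real.pi := by
    have h1 : (⌊(a - θ₂) / Real.pi⌋ : ℝ) ≤ (a - θ₂) / Real.pi := Int.floor_le _
    have h2 : (⌊(a - θ₂) / Real.pi⌋ : ℝ) * Real.pi ≤ a - θ₂ := by
      rw [← le_div_iff₀ hπ]; exact h1
    have h3 : ((m : ℤ) : ℝ) = (⌊(a - θ₂) / Real.pi⌋ : ℝ) + 1 := by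
      rw [hmdef]; push_cast; ring
    rw [h3]; linarith
  have hcopy3 : θ₂ + (m : ℝ) * Real.pi ≠ a + Real.pi := by
    intro h
    apply hθ₂a
    have h2 : θ₂ - a = (((1 : ℤ) - m : ℤ) : ℝ) * Real.pi := by push_cast; linarith
    rw [h2]
    exact Real.sin_int_mul_pi _
  have hcopyb : b ≤ θ₂ + (m : ℝ) * Real.pi := by
    apply hblb
    refine ⟨hcopyΘ, ?_⟩
    by_contra hcon
    rw [Set.mem_Ici, not_le] at hcon
    exact absurd (haub _ ⟨hcopyΘ, Set.mem_Iic.2 (le_of_lt hcon)⟩) (not_le.2 hcopy1)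
  refine ⟨a, b, lt_trans haθ' hbθ', ?_, hamem.1, hbmem.1, ?_⟩
  · exact lt_of_le_of_lt hcopyb (lt_of_le_of_ne hcopy2 hcopy3)
  · intro c hac hcb
    exact hgap c hac hcb

end IPSLE

namespace IPSLE

set_option maxHeartbeats 1000000 in
/-- a positive combination of the two endpoint directions of a gap arc points into the arc -/
lemma comb_pos (rr : ℝ × ℝ → ℝ)
    (hhom : ∀ (c : ℝ) (p : ℝ × ℝ), rr (c * p.1, c * p.2) = c ^ 2 * rr p)
    (hnn : ∀ p, 0 ≤ rr p)
    (a b : ℝ) (hab : a < b) (hb : b < a + Real.pi)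
    (hgap : ∀ c : ℝ, a < c → c < b → rr (Real.cos c, Real.sin c) ≠ 0)
    (γ δ : ℝ) (hγ : 0 < γ) (hδ : 0 < δ) :
    0 < rr (γ * Real.cos a + δ * Real.cos b, γ * Real.sin a + δ * Real.sin b) := by
  have hπ := Real.pi_pos
  obtain ⟨u1, hu1⟩ : ∃ x : ℝ, x = γ * Real.cos a + δ * Real.cos b := ⟨_, rfl⟩
  obtain ⟨u2, hu2⟩ : ∃ x : ℝ, x = γ * Real.sin a + δ * Real.sin b := ⟨_, rfl⟩
  have hba1 : 0 < b - a := by linarith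
  have hba2 : b - a < Real.pi := by linarith
  have hsinba : 0 < Real.sin (b - a) := Real.sin_pos_of_pos_of_lt_pi hba1 hba2
  have hcosba : Real.cos Real.pi < Real.cos (b - a) := by
    apply Real.strictAntiOn_cos ⟨hba1.le, hba2.le⟩ ⟨hπ.le, le_refl _⟩ hba2
  rw [Real.cos_pi] at hcosba
  have hca := Real.cos_sq_add_sin_sq a
  have hcb := Real.cos_sq_add_sin_sq b
  have hcosab : Real.cos (b - a) = Real.cos b * Real.cos a + Real.sin b * Real.sin a :=
    Real.cos_sub b a
  have hsinab : Real.sin (b - a) = Real.sin b * Real.cos a - Real.cos b * Real.sin a :=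
    Real.sin_sub b a
  have hρ2 : 0 < u1 ^ 2 + u2 ^ 2 := by
    have h1 : u1 ^ 2 + u2 ^ 2 = γ ^ 2 + δ ^ 2 + 2 * γ * δ * Real.cos (b - a) := by
      rw [hu1, hu2, hcosab]
      nlinarith [hca, hcb]
    nlinarith [mul_pos hγ hδ, sq_nonneg (γ - δ)]
  obtain ⟨ρ, hρ⟩ : ∃ x : ℝ, x = Real.sqrt (u1 ^ 2 + u2 ^ 2) := ⟨_, rfl⟩
  have hρpos : 0 < ρ := by rw [hρ]; exact Real.sqrt_pos.2 hρ2
  have hρsq : ρ ^ 2 = u1 ^ 2 + u2 ^ 2 := by rw [hρ]; exact Real.sq_sqrt hρ2.le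
  obtain ⟨v1, hv1⟩ : ∃ x : ℝ, x = u1 / ρ := ⟨_, rfl⟩
  obtain ⟨v2, hv2⟩ : ∃ x : ℝ, x = u2 / ρ := ⟨_, rfl⟩
  have hvunit : v1 ^ 2 + v2 ^ 2 = 1 := by
    rw [hv1, hv2]
    field_simp
    linarith [hρsq]
  obtain ⟨dot, hdot⟩ : ∃ x : ℝ, x = Real.cos a * v1 + Real.sin a * v2 := ⟨_, rfl⟩
  obtain ⟨dtv, hdtv⟩ : ∃ x : ℝ, x = Real.cos a * v2 - Real.sin a * v1 := ⟨_, rfl⟩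
  have hdtvpos : 0 < dtv := by
    have h1 : Real.cos a * u2 - Real.sin a * u1 = δ * Real.sin (b - a) := by
      rw [hu1, hu2, hsinab]; ring
    have h2 : dtv = (δ * Real.sin (b - a)) / ρ := by
      rw [hdtv, hv1, hv2, ← h1]; field_simp
    rw [h2]
    positivity
  have hpyth : dot ^ 2 + dtv ^ 2 = 1 := by
    have h1 : dot ^ 2 + dtv ^ 2 = (Real.cos a ^ 2 + Real.sin a ^ 2) * (v1 ^ 2 + v2 ^ 2) := by
      rw [hdot, hdtv]; ring
    rw [h1, hca, hvunit]; ring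
  have hd1 : -1 ≤ dot := by nlinarith [sq_nonneg dtv]
  have hd2 : dot ≤ 1 := by nlinarith [sq_nonneg dtv]
  obtain ⟨φ, hφ⟩ : ∃ x : ℝ, x = Real.arccos dot := ⟨_, rfl⟩
  have hcosφ : Real.cos φ = dot := by rw [hφ]; exact Real.cos_arccos hd1 hd2
  have hsinφ : Real.sin φ = dtv := by
    rw [hφ, Real.sin_arccos]
    rw [show (1 : ℝ) - dot ^ 2 = dtv ^ 2 by linarith]
    exact (Real.sqrt_sq_eq_abs dtv).trans (abs_of_pos hdtvpos)
  have hφ0 : 0 < φ := by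
    rcases lt_or_eq_of_le (hφ ▸ Real.arccos_nonneg dot) with h | h
    · exact h
    · exfalso; rw [← h] at hsinφ; rw [Real.sin_zero] at hsinφ; linarith
  have hφπ : φ < Real.pi := by
    rcases lt_or_eq_of_le (hφ ▸ Real.arccos_le_pi dot) with h | h
    · exact h
    · exfalso; rw [h, Real.sin_pi] at hsinφ; linarith
  have hc1 : Real.cos (a + φ) = v1 := by
    rw [Real.cos_add, hcosφ, hsinφ, hdot, hdtv]
    linear_combination v1 * hca
  have hc2 : Real.sin (a + φ) = v2 := by
    rw [Real.sin_add, hcosφ, hsinφ, hdot, hdtv]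
    linear_combination v2 * hca
  -- a + φ lies strictly inside the gap
  have hsinbc : 0 < Real.sin (b - (a + φ)) := by
    have h1 : Real.sin b * u1 - Real.cos b * u2 = γ * Real.sin (b - a) := by
      rw [hu1, hu2, hsinab]; ring
    have h2 : Real.sin (b - (a + φ)) = Real.sin b * v1 - Real.cos b * v2 := by
      rw [Real.sin_sub, hc1, hc2]
    have h3 : Real.sin b * v1 - Real.cos b * v2 = (γ * Real.sin (b - a)) / ρ := by
      rw [hv1, hv2, ← h1]; field_simp
    rw [h2, h3]
    positivity
  have hcb2 : a + φ < b := by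
    by_contra hcon
    push_neg at hcon
    have h1 : 0 ≤ (a + φ) - b := by linarith
    have h2 : (a + φ) - b ≤ Real.pi := by linarith
    have h3 : 0 ≤ Real.sin ((a + φ) - b) := Real.sin_nonneg_of_nonneg_of_le_pi h1 h2
    rw [show (a + φ) - b = -(b - (a + φ)) by ring, Real.sin_neg] at h3
    linarith
  have hval : rr (Real.cos (a + φ), Real.sin (a + φ)) ≠ 0 :=
    hgap (a + φ) (by linarith) hcb2
  have hval2 : 0 < rr (v1, v2) := by
    rw [← hc1, ← hc2]
    exact lt_of_le_of_ne (hnn _) (Ne.symm hval)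
  have hfin : (γ * Real.cos a + δ * Real.cos b, γ * Real.sin a + δ * Real.sin b)
      = ((ρ : ℝ) * v1, ρ * v2) := by
    rw [hv1, hv2, ← hu1, ← hu2]
    field_simp
  rw [hfin]
  have := hhom ρ (v1, v2)
  simp only at this
  rw [this]
  positivity

end IPSLE

namespace IPSLE

set_option maxHeartbeats 2000000 in
/-- The core 2-dimensional result: if every pair of directions admits a scaled
parallelogram inequality, then `q` satisfies the parallelogram law. -/
theorem core (q : ℝ × ℝ → ℝ) (hcont : Continuous q)
    (hhom : ∀ (c : ℝ) (p : ℝ × ℝ), q (c * p.1, c * p.2) = c ^ 2 * q p)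
    (hpos : ∀ p : ℝ × ℝ, p ≠ 0 → 0 < q p)
    (hH : ∀ p₁ p₂ : ℝ × ℝ, p₁ ≠ 0 → p₂ ≠ 0 → ∃ γ δ : ℝ, γ ≠ 0 ∧ δ ≠ 0 ∧
      q (γ * p₁.1 + δ * p₂.1, γ * p₁.2 + δ * p₂.2)
        + q (γ * p₁.1 - δ * p₂.1, γ * p₁.2 - δ * p₂.2)
        ≤ 2 * (γ ^ 2 * q p₁ + δ ^ 2 * q p₂)) :
    ∀ p₁ p₂ : ℝ × ℝ, q (p₁.1 + p₂.1, p₁.2 + p₂.2) + q (p₁.1 - p₂.1, p₁.2 - p₂.2)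
      = 2 * (q p₁ + q p₂) := by
  obtain ⟨B, hB, hdd, hmax⟩ := exists_Bmax q hcont hhom hpos
  have hrnn : ∀ p, 0 ≤ q p - ff B p := r_nonneg q B hB
  have hrhom : ∀ (c : ℝ) (p : ℝ × ℝ),
      q (c * p.1, c * p.2) - ff B (c * p.1, c * p.2) = c ^ 2 * (q p - ff B p) := by
    intro c p
    have h1 := hhom c p
    unfold ff
    linear_combination h1
  have hrneg : ∀ p : ℝ × ℝ, q (-p.1, -p.2) - ff B (-p.1, -p.2) = q p - ff B p := by
    intro p
    have h1 := hrhom (-1) p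
    have h2 : ((-1 : ℝ) * p.1, (-1 : ℝ) * p.2) = (-p.1, -p.2) := by norm_num
    rw [h2] at h1
    rw [h1]; ring
  have hffpar : ∀ x1 y1 x2 y2 γ δ : ℝ,
      ff B (γ * x1 + δ * x2, γ * y1 + δ * y2) + ff B (γ * x1 - δ * x2, γ * y1 - δ * y2)
        = 2 * (γ ^ 2 * ff B (x1, y1) + δ ^ 2 * ff B (x2, y2)) := by
    intro x1 y1 x2 y2 γ δ
    unfold ff
    ring
  -- main claim: full contact on the circle
  have hall : ∀ p : ℝ × ℝ, p.1 ^ 2 + p.2 ^ 2 = 1 → q p = ff B p := by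
    by_contra hcon
    push_neg at hcon
    obtain ⟨pstar, hpunit, hpne⟩ := hcon
    obtain ⟨z, hzunit, hzc⟩ := exists_zero q hcont hhom B hB hmax
    have htwo : ∃ w : ℝ × ℝ, w.1 ^ 2 + w.2 ^ 2 = 1 ∧ q w = ff B w ∧
        z.1 * w.2 - z.2 * w.1 ≠ 0 := by
      by_cases hsingle : ∀ w : ℝ × ℝ, w.1 ^ 2 + w.2 ^ 2 = 1 → q w = ff B w →
          (w = z ∨ w = -z)
      · exact absurd (not_single_contact q hcont hhom B hB hdd hmax z hzunit hsingle) id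
      · push_neg at hsingle
        obtain ⟨w, hwunit, hwc, hwz1, hwz2⟩ := hsingle
        refine ⟨w, hwunit, hwc, fun hcr => ?_⟩
        rcases unit_parallel z w hzunit hwunit hcr with h | h
        · exact hwz1 h
        · exact hwz2 h
    obtain ⟨w, hwunit, hwc, hcross⟩ := htwo
    obtain ⟨θ₀, hθ₀c, hθ₀s⟩ := exists_angle z hzunit
    obtain ⟨θ₁, hθ₁c, hθ₁s⟩ := exists_angle w hwunit
    obtain ⟨θ', hθ'c, hθ's⟩ := exists_angle pstar hpunit
    have hz0 : (fun p => q p - ff B p) (Real.cos θ₀, Real.sin θ₀) = 0 := by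
      simp only
      rw [hθ₀c, hθ₀s, show ((z.1, z.2) : ℝ × ℝ) = z from rfl]
      linarith [hzc]
    have hz1 : (fun p => q p - ff B p) (Real.cos θ₁, Real.sin θ₁) = 0 := by
      simp only
      rw [hθ₁c, hθ₁s, show ((w.1, w.2) : ℝ × ℝ) = w from rfl]
      linarith [hwc]
    have hdist : Real.sin (θ₁ - θ₀) ≠ 0 := by
      rw [Real.sin_sub, hθ₁c, hθ₁s, hθ₀c, hθ₀s]
      intro h
      apply hcross
      linarith
    have hstar : (fun p => q p - ff B p) (Real.cos θ', Real.sin θ') ≠ 0 := by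
      simp only
      rw [hθ'c, hθ's, show ((pstar.1, pstar.2) : ℝ × ℝ) = pstar from rfl]
      intro h
      exact hpne (by linarith)
    obtain ⟨a, b, hab, hbpi, ha0, hb0, hgap⟩ := gap_arc (fun p => q p - ff B p)
      (hcont.sub (ff_cont B)) hrneg θ₀ θ₁ θ' hz0 hz1 hdist hstar
    -- apply the hypothesis at the two endpoints of the gap
    have hane : ((Real.cos a, Real.sin a) : ℝ × ℝ) ≠ 0 := by
      intro h
      have h1 : Real.cos a = 0 ∧ Real.sin a = 0 := ⟨congrArg Prod.fst h, congrArg Prod.snd h⟩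
      have := Real.cos_sq_add_sin_sq a
      rw [h1.1, h1.2] at this
      norm_num at this
    have hbne : ((Real.cos b, Real.sin b) : ℝ × ℝ) ≠ 0 := by
      intro h
      have h1 : Real.cos b = 0 ∧ Real.sin b = 0 := ⟨congrArg Prod.fst h, congrArg Prod.snd h⟩
      have := Real.cos_sq_add_sin_sq b
      rw [h1.1, h1.2] at this
      norm_num at this
    obtain ⟨γ, δ, hγ, hδ, hineq⟩ := hH (Real.cos a, Real.sin a) (Real.cos b, Real.sin b)
      hane hbne
    simp only at hineq
    -- contact at the endpoints
    have hca0 : q (Real.cos a, Real.sin a) = ff B (Real.cos a, Real.sin a) := by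
      have := ha0; linarith
    have hcb0 : q (Real.cos b, Real.sin b) = ff B (Real.cos b, Real.sin b) := by
      have := hb0; linarith
    have hsum : (q (γ * Real.cos a + δ * Real.cos b, γ * Real.sin a + δ * Real.sin b)
          - ff B (γ * Real.cos a + δ * Real.cos b, γ * Real.sin a + δ * Real.sin b))
        + (q (γ * Real.cos a - δ * Real.cos b, γ * Real.sin a - δ * Real.sin b)
          - ff B (γ * Real.cos a - δ * Real.cos b, γ * Real.sin a - δ * Real.sin b)) ≤ 0 := by
      have h1 := hffpar (Real.cos a) (Real.sin a) (Real.cos b) (Real.sin b) γ δ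
      rw [hca0, hcb0] at hineq
      linarith
    -- one of the two combination points lies strictly inside the gap
    have hKey : ∀ γ' δ' : ℝ, 0 < γ' → 0 < δ' →
        0 < q (γ' * Real.cos a + δ' * Real.cos b, γ' * Real.sin a + δ' * Real.sin b)
          - ff B (γ' * Real.cos a + δ' * Real.cos b, γ' * Real.sin a + δ' * Real.sin b) :=
      fun γ' δ' h1 h2 => comb_pos (fun p => q p - ff B p) hrhom hrnn a b hab hbpi hgap γ' δ' h1 h2
    have hnegpt : ∀ x y : ℝ, q (-x, -y) - ff B (-x, -y) = q (x, y) - ff B (x, y) :=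
      fun x y => hrneg (x, y)
    rcases lt_or_gt_of_ne hγ with hγn | hγp
    · rcases lt_or_gt_of_ne hδ with hδn | hδp
      · -- γ<0, δ<0 : P = -((-γ)p₁ + (-δ)p₂)
        have h1 := hKey (-γ) (-δ) (by linarith) (by linarith)
        have h2 : ((-γ) * Real.cos a + (-δ) * Real.cos b, (-γ) * Real.sin a + (-δ) * Real.sin b)
            = (-(γ * Real.cos a + δ * Real.cos b), -(γ * Real.sin a + δ * Real.sin b)) := by
          norm_num; constructor <;> ring
        rw [h2, hnegpt] at h1
        have h3 := hrnn (γ * Real.cos a - δ * Real.cos b, γ * Real.sin a - δ * Real.sin b)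
        linarith
      · -- γ<0, δ>0 : Q = -((-γ)p₁ + δp₂)
        have h1 := hKey (-γ) δ (by linarith) hδp
        have h2 : ((-γ) * Real.cos a + δ * Real.cos b, (-γ) * Real.sin a + δ * Real.sin b)
            = (-(γ * Real.cos a - δ * Real.cos b), -(γ * Real.sin a - δ * Real.sin b)) := by
          norm_num; constructor <;> ring
        rw [h2, hnegpt] at h1
        have h3 := hrnn (γ * Real.cos a + δ * Real.cos b, γ * Real.sin a + δ * Real.sin b)
        linarith
    · rcases lt_or_gt_of_ne hδ with hδn | hδp
      · -- γ>0, δ<0 : Q = γp₁ + (-δ)p₂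
        have h1 := hKey γ (-δ) hγp (by linarith)
        have h2 : (γ * Real.cos a + (-δ) * Real.cos b, γ * Real.sin a + (-δ) * Real.sin b)
            = (γ * Real.cos a - δ * Real.cos b, γ * Real.sin a - δ * Real.sin b) := by
          rw [Prod.mk.injEq]; constructor <;> ring
        rw [h2] at h1
        have h3 := hrnn (γ * Real.cos a + δ * Real.cos b, γ * Real.sin a + δ * Real.sin b)
        linarith
      · -- γ>0, δ>0 : P itself
        have h1 := hKey γ δ hγp hδp
        have h3 := hrnn (γ * Real.cos a - δ * Real.cos b, γ * Real.sin a - δ * Real.sin b)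
        linarith
  -- full contact everywhere
  have hq : ∀ p : ℝ × ℝ, q p = ff B p := by
    intro p
    rcases eq_or_ne p 0 with rfl | hp
    · have h1 := hhom 0 ((0:ℝ), (0:ℝ))
      simp at h1
      have h2 : ff B ((0:ℝ), (0:ℝ)) = 0 := by unfold ff; simp
      rw [show ((0:ℝ×ℝ)) = ((0:ℝ), (0:ℝ)) from rfl, h2]
      exact h1
    · have h0 : 0 ≤ q p - ff B p := hrnn p
      have h1 : q p - ff B p = 0 := by
        have hpos2 : 0 < p.1 ^ 2 + p.2 ^ 2 := by
          have h1 : p.1 ≠ 0 ∨ p.2 ≠ 0 := by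
            by_contra hcon
            push_neg at hcon
            exact hp (Prod.ext hcon.1 hcon.2)
          rcases h1 with h1 | h1 <;> positivity
        obtain ⟨ρ, hρ⟩ : ∃ x : ℝ, x = Real.sqrt (p.1 ^ 2 + p.2 ^ 2) := ⟨_, rfl⟩
        have hρpos : 0 < ρ := by rw [hρ]; exact Real.sqrt_pos.2 hpos2
        have hρsq : ρ ^ 2 = p.1 ^ 2 + p.2 ^ 2 := by rw [hρ]; exact Real.sq_sqrt hpos2.le
        have hu : (p.1 / ρ) ^ 2 + (p.2 / ρ) ^ 2 = 1 := by
          field_simp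
          linarith
        have h2 := hall (p.1 / ρ, p.2 / ρ) hu
        have h3 := hrhom ρ (p.1 / ρ, p.2 / ρ)
        simp only at h3
        have h4 : (ρ * (p.1 / ρ), ρ * (p.2 / ρ)) = p := by
          have : ρ * (p.1 / ρ) = p.1 := by field_simp
          have : ρ * (p.2 / ρ) = p.2 := by field_simp
          exact Prod.ext (by field_simp) (by field_simp)
        rw [h4] at h3
        rw [h3]
        rw [h2]
        ring
      linarith
  intro p₁ p₂
  rw [hq p₁, hq p₂, hq (p₁.1 + p₂.1, p₁.2 + p₂.2), hq (p₁.1 - p₂.1, p₁.2 - p₂.2)]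
  have h1 := hffpar p₁.1 p₁.2 p₂.1 p₂.2 1 1
  simp only [one_mul, one_pow] at h1
  rw [show ((p₁.1, p₁.2) : ℝ × ℝ) = p₁ from rfl, show ((p₂.1, p₂.2) : ℝ × ℝ) = p₂ from rfl] at h1
  linarith

end IPSLE

set_option maxHeartbeats 1000000 in
/-- Let `X` be a real normed linear space with `dim X ≥ 2`. If for all unit vectors
`x, y` there exist nonzero reals `α, β` with `‖αx + βy‖² + ‖αx − βy‖² ≤ 2(α² + β²)`,
then the norm of `X` is induced by an inner product, i.e. it satisfies the
parallelogram law. -/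
theorem inner_product_space_of_exists_le
    {X : Type*} [NormedAddCommGroup X] [NormedSpace ℝ X]
    (hdim : 2 ≤ Module.rank ℝ X)
    (h : ∀ x y : X, ‖x‖ = 1 → ‖y‖ = 1 → ∃ α β : ℝ, α ≠ 0 ∧ β ≠ 0 ∧
      ‖α • x + β • y‖ ^ 2 + ‖α • x - β • y‖ ^ 2 ≤ 2 * (α ^ 2 + β ^ 2)) :
    ∀ x y : X, ‖x + y‖ ^ 2 + ‖x - y‖ ^ 2 = 2 * (‖x‖ ^ 2 + ‖y‖ ^ 2) := by
  intro x y
  by_cases hind : ∀ a b : ℝ, a • x + b • y = 0 → a = 0 ∧ b = 0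
  · -- the two vectors are linearly independent; use the 2-dimensional core theorem
    obtain ⟨q, hqdef⟩ : ∃ q : ℝ × ℝ → ℝ, q = fun p : ℝ × ℝ => ‖p.1 • x + p.2 • y‖ ^ 2 :=
      ⟨_, rfl⟩
    have hqval : ∀ s t : ℝ, q (s, t) = ‖s • x + t • y‖ ^ 2 := by
      intro s t; rw [hqdef]
    have hcont : Continuous q := by
      rw [hqdef]
      have h1 : Continuous fun p : ℝ × ℝ => p.1 • x + p.2 • y :=
        (continuous_fst.smul continuous_const).add (continuous_snd.smul continuous_const)
      exact (h1.norm).pow 2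
    have hhom : ∀ (c : ℝ) (p : ℝ × ℝ), q (c * p.1, c * p.2) = c ^ 2 * q p := by
      intro c p
      rw [hqdef]
      simp only
      have h1 : (c * p.1) • x + (c * p.2) • y = c • (p.1 • x + p.2 • y) := by
        rw [smul_add, smul_smul, smul_smul]
      rw [h1, norm_smul, Real.norm_eq_abs, mul_pow, sq_abs]
    have hvec_ne : ∀ p : ℝ × ℝ, p ≠ 0 → p.1 • x + p.2 • y ≠ 0 := by
      intro p hp hzero
      obtain ⟨h1, h2⟩ := hind p.1 p.2 hzero
      exact hp (Prod.ext h1 h2)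
    have hpos : ∀ p : ℝ × ℝ, p ≠ 0 → 0 < q p := by
      intro p hp
      rw [hqdef]
      simp only
      exact pow_pos (norm_pos_iff.2 (hvec_ne p hp)) 2
    have hH : ∀ p₁ p₂ : ℝ × ℝ, p₁ ≠ 0 → p₂ ≠ 0 → ∃ γ δ : ℝ, γ ≠ 0 ∧ δ ≠ 0 ∧
        q (γ * p₁.1 + δ * p₂.1, γ * p₁.2 + δ * p₂.2)
          + q (γ * p₁.1 - δ * p₂.1, γ * p₁.2 - δ * p₂.2)
          ≤ 2 * (γ ^ 2 * q p₁ + δ ^ 2 * q p₂) := by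
      intro p₁ p₂ hp₁ hp₂
      have hv₁ : p₁.1 • x + p₁.2 • y ≠ 0 := hvec_ne p₁ hp₁
      have hv₂ : p₂.1 • x + p₂.2 • y ≠ 0 := hvec_ne p₂ hp₂
      obtain ⟨ρ₁, hρ₁⟩ : ∃ r : ℝ, r = ‖p₁.1 • x + p₁.2 • y‖ := ⟨_, rfl⟩
      obtain ⟨ρ₂, hρ₂⟩ : ∃ r : ℝ, r = ‖p₂.1 • x + p₂.2 • y‖ := ⟨_, rfl⟩
      have hρ₁pos : 0 < ρ₁ := by rw [hρ₁]; exact norm_pos_iff.2 hv₁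
      have hρ₂pos : 0 < ρ₂ := by rw [hρ₂]; exact norm_pos_iff.2 hv₂
      have hU₁ : ‖ρ₁⁻¹ • (p₁.1 • x + p₁.2 • y)‖ = 1 := by
        rw [norm_smul, Real.norm_eq_abs, abs_of_pos (inv_pos.2 hρ₁pos), ← hρ₁]
        field_simp
      have hU₂ : ‖ρ₂⁻¹ • (p₂.1 • x + p₂.2 • y)‖ = 1 := by
        rw [norm_smul, Real.norm_eq_abs, abs_of_pos (inv_pos.2 hρ₂pos), ← hρ₂]
        field_simp
      obtain ⟨α, β, hα, hβ, hle⟩ := h _ _ hU₁ hU₂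
      refine ⟨α / ρ₁, β / ρ₂, div_ne_zero hα hρ₁pos.ne', div_ne_zero hβ hρ₂pos.ne', ?_⟩
      have hkeyp : α • (ρ₁⁻¹ • (p₁.1 • x + p₁.2 • y)) + β • (ρ₂⁻¹ • (p₂.1 • x + p₂.2 • y))
          = ((α / ρ₁) * p₁.1 + (β / ρ₂) * p₂.1) • x + ((α / ρ₁) * p₁.2 + (β / ρ₂) * p₂.2) • y := by
        rw [div_eq_mul_inv, div_eq_mul_inv]
        module
      have hkeym : α • (ρ₁⁻¹ • (p₁.1 • x + p₁.2 • y)) - β • (ρ₂⁻¹ • (p₂.1 • x + p₂.2 • y))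
          = ((α / ρ₁) * p₁.1 - (β / ρ₂) * p₂.1) • x + ((α / ρ₁) * p₁.2 - (β / ρ₂) * p₂.2) • y := by
        rw [div_eq_mul_inv, div_eq_mul_inv]
        module
      rw [hkeyp, hkeym] at hle
      have hα2 : α ^ 2 = (α / ρ₁) ^ 2 * q p₁ := by
        have : q p₁ = ρ₁ ^ 2 := by
          rw [hqdef]; simp only; rw [hρ₁]
        rw [this]
        field_simp
      have hβ2 : β ^ 2 = (β / ρ₂) ^ 2 * q p₂ := by
        have : q p₂ = ρ₂ ^ 2 := by
          rw [hqdef]; simp only; rw [hρ₂]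
        rw [this]
        field_simp
      rw [hα2, hβ2] at hle
      rw [hqval, hqval]
      exact hle
    have hcore := IPSLE.core q hcont hhom hpos hH (1, 0) (0, 1)
    simp only at hcore
    rw [hqval, hqval, hqval, hqval] at hcore
    norm_num at hcore
    rw [sub_eq_add_neg]
    linarith [hcore]
  · -- degenerate case: x, y linearly dependent
    push_neg at hind
    obtain ⟨a, b, hab, hne⟩ := hind
    by_cases hb : b = 0
    · have ha : a ≠ 0 := by
        intro ha
        first
        | exact absurd hb (hne ha)
        | exact hne ⟨ha, hb⟩
      rw [hb, zero_smul, add_zero] at hab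
      have hx : x = 0 := by
        have := smul_eq_zero.1 hab
        tauto
      rw [hx]
      simp
      ring
    · have hy : y = (b⁻¹ * -a) • x := by
        have h2 : b • y = (-a) • x := by
          rw [neg_smul]
          exact eq_neg_of_add_eq_zero_right hab
        calc y = (b⁻¹ * b) • y := by rw [inv_mul_cancel₀ hb, one_smul]
          _ = b⁻¹ • (b • y) := by rw [mul_smul]
          _ = b⁻¹ • ((-a) • x) := by rw [h2]
          _ = (b⁻¹ * -a) • x := by rw [mul_smul]
      rw [hy]
      rw [show x + (b⁻¹ * -a) • x = (1 + (b⁻¹ * -a)) • x by module,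
        show x - (b⁻¹ * -a) • x = (1 - (b⁻¹ * -a)) • x by module]
      rw [norm_smul, norm_smul, norm_smul, Real.norm_eq_abs, Real.norm_eq_abs,
        Real.norm_eq_abs, mul_pow, mul_pow, mul_pow, sq_abs, sq_abs, sq_abs]
      ring
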